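/- (Newton's method quadratic global convergence in an isolated disc — contraction step) Let p be a complex polynomial of degree n ≥ 2 with simple root x₁, and let y be a point with 0 < 3(n-1)·|y - x₁| < |y - x_j| for all other roots x_j (j = 2,…,n). Then p'(y) ≠ 0 and the Newton iterate y' = y - p(y)/p'(y) satisfies |y' - x₁| ≤ |y - x₁|/2. -/

import Mathlib

open Polynomial in
lemma deriv_finset_prod_aux {ι : Type*} [DecidableEq ι] (s : Finset ι) (f : ι → Polynomial ℂ) :
    Polynomial.derivative (∏ j ∈ s, f j)
      = ∑ i ∈ s, (∏ j ∈ s.erase i, f j) * Polynomial.derivative (f i) := by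
  induction s using Finset.induction with
  | empty => simp
  | @insert a s h ih =>
    rw [Finset.prod_insert h, derivative_mul, ih, Finset.sum_insert h,
      Finset.erase_insert h, Finset.mul_sum]
    congr 1
    · exact mul_comm _ _
    apply Finset.sum_congr rfl
    intro i hi
    have hia : i ≠ a := by rintro rfl; exact h hi
    rw [Finset.erase_insert_of_ne hia.symm, Finset.prod_insert (fun hc => h (Finset.mem_of_mem_erase hc)),
      mul_assoc]

open Polynomial in
theorem stmt_16 (n : ℕ) (hn : 2 ≤ n) (a : ℂ) (ha : a ≠ 0) (x : ℕ → ℂ)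
    (p : Polynomial ℂ) (hp : p = C a * ∏ j ∈ Finset.Icc 1 n, (X - C (x j)))
    (y : ℂ) (hy1 : y ≠ x 1)
    (hiso : ∀ j ∈ Finset.Icc 2 n,
      3 * (n - 1 : ℝ) * ‖y - x 1‖ < ‖y - x j‖) :
    Polynomial.eval y (Polynomial.derivative p) ≠ 0 ∧
      ‖y - Polynomial.eval y p / Polynomial.eval y (Polynomial.derivative p)
        - x 1‖ ≤ ‖y - x 1‖ / 2 := by
  set d : ℕ → ℂ := fun j => y - x j with hd
  have hd1 : d 1 ≠ 0 := sub_ne_zero.mpr hy1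
  have habs1 : 0 < ‖d 1‖ := by
    exact norm_pos_iff.mpr hd1
  have hn1 : (1:ℝ) ≤ (n:ℝ) - 1 := by
    have : (2:ℝ) ≤ n := by exact_mod_cast hn
    linarith
  have hbpos : 0 < 3 * ((n:ℝ) - 1) * ‖d 1‖ := mul_pos (mul_pos (by norm_num) (by linarith)) habs1
  have hdj : ∀ j ∈ Finset.Icc 2 n, d j ≠ 0 := by
    intro j hj
    have h := hiso j hj
    have : 0 < ‖d j‖ := lt_trans hbpos h
    exact norm_ne_zero_iff.mp (ne_of_gt this)
  have hdall : ∀ j ∈ Finset.Icc 1 n, d j ≠ 0 := by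
    intro j hj
    rcases eq_or_ne j 1 with rfl | h
    · exact hd1
    · apply hdj; simp only [Finset.mem_Icc] at hj ⊢; omega
  have hprodne : (∏ j ∈ Finset.Icc 1 n, d j) ≠ 0 := Finset.prod_ne_zero_iff.mpr hdall
  have hevalp : Polynomial.eval y p = a * ∏ j ∈ Finset.Icc 1 n, d j := by
    simp [hp, eval_prod, hd]
  set S : ℂ := ∑ j ∈ Finset.Icc 1 n, (d j)⁻¹ with hS
  have hevalp' : Polynomial.eval y (Polynomial.derivative p)
      = a * (∏ j ∈ Finset.Icc 1 n, d j) * S := by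
    rw [hp, derivative_C_mul, deriv_finset_prod_aux]
    simp only [derivative_X_sub_C, mul_one]
    rw [eval_mul, eval_C, eval_finset_sum, mul_assoc]
    congr 1
    rw [hS, Finset.mul_sum]
    apply Finset.sum_congr rfl
    intro i hi
    rw [eval_prod]
    simp only [eval_sub, eval_X, eval_C]
    have h1 : ∏ j ∈ (Finset.Icc 1 n).erase i, (y - x j)
        = (∏ j ∈ Finset.Icc 1 n, d j) * (d i)⁻¹ := by
      rw [eq_mul_inv_iff_mul_eq₀ (hdall i hi)]
      exact Finset.prod_erase_mul _ _ hi
    rw [h1]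
  set T : ℂ := ∑ j ∈ Finset.Icc 2 n, (d j)⁻¹ with hT
  have hsplit : S = (d 1)⁻¹ + T := by
    rw [hS, show Finset.Icc 1 n = insert 1 (Finset.Icc 2 n) by
      ext j; simp only [Finset.mem_Icc, Finset.mem_insert]; omega,
      Finset.sum_insert (by simp)]
  have hTb : ‖T‖ ≤ 1 / (3 * ‖d 1‖) := by
    calc ‖T‖ ≤ ∑ j ∈ Finset.Icc 2 n, ‖(d j)⁻¹‖ :=
          norm_sum_le _ _
      _ ≤ ∑ j ∈ Finset.Icc 2 n, (3 * ((n:ℝ) - 1) * ‖d 1‖)⁻¹ := by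
          apply Finset.sum_le_sum
          intro j hj
          rw [norm_inv]
          exact inv_anti₀ hbpos (le_of_lt (hiso j hj))
      _ = ((n:ℝ) - 1) * (3 * ((n:ℝ) - 1) * ‖d 1‖)⁻¹ := by
          rw [Finset.sum_const, Nat.card_Icc, nsmul_eq_mul]
          congr 1
          have h2 : n + 1 - 2 = n - 1 := by omega
          rw [h2]
          push_cast [Nat.cast_sub (by omega : 1 ≤ n)]
          ring
      _ = 1 / (3 * ‖d 1‖) := by
          have hne : ((n:ℝ) - 1) ≠ 0 := by linarith
          field_simp
  have hSlow : 2 / (3 * ‖d 1‖) ≤ ‖S‖ := by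
    have h1 : ‖(d 1)⁻¹‖ ≤ ‖S‖ + ‖T‖ := by
      have := norm_add_le S (-T)
      simpa [hsplit] using this
    rw [norm_inv] at h1
    have h2 : (‖d 1‖)⁻¹ = 1 / ‖d 1‖ := (one_div _).symm
    have h3 : 2 / (3 * ‖d 1‖)
        = 1 / ‖d 1‖ - 1 / (3 * ‖d 1‖) := by
      field_simp
      ring
    linarith [hTb]
  have hSpos : 0 < ‖S‖ := lt_of_lt_of_le (div_pos (by norm_num) (mul_pos (by norm_num) habs1)) hSlow
  have hSne : S ≠ 0 := norm_ne_zero_iff.mp (ne_of_gt hSpos)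
  have hp'ne : Polynomial.eval y (Polynomial.derivative p) ≠ 0 := by
    rw [hevalp']
    exact mul_ne_zero (mul_ne_zero ha hprodne) hSne
  refine ⟨hp'ne, ?_⟩
  have hdiv : Polynomial.eval y p / Polynomial.eval y (Polynomial.derivative p) = S⁻¹ := by
    rw [hevalp, hevalp']
    field_simp
  rw [hdiv]
  have key : y - S⁻¹ - x 1 = d 1 * T / S := by
    have h1 : y - S⁻¹ - x 1 = d 1 - S⁻¹ := by rw [hd]; ring
    rw [h1, eq_div_iff hSne, sub_mul, inv_mul_cancel₀ hSne, hsplit, mul_add,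
      mul_inv_cancel₀ hd1]
    ring
  rw [key, norm_div, norm_mul]
  have hnum : ‖d 1‖ * ‖T‖ ≤ 1 / 3 := by
    have h4 := mul_le_mul_of_nonneg_left hTb (le_of_lt habs1)
    have h5 : ‖d 1‖ * (1 / (3 * ‖d 1‖)) = 1 / 3 := by
      rw [mul_one_div, mul_comm (3:ℝ), div_mul_eq_div_div, div_self (ne_of_gt habs1)]
    linarith
  have hfin : (1 / 3 : ℝ) / (2 / (3 * ‖d 1‖)) = ‖d 1‖ / 2 := by
    rw [div_div_eq_mul_div]
    ring
  calc ‖d 1‖ * ‖T‖ / ‖S‖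
      ≤ (1 / 3) / (2 / (3 * ‖d 1‖)) :=
        div_le_div₀ (by norm_num) hnum (div_pos (by norm_num) (mul_pos (by norm_num) habs1)) hSlow
    _ = ‖d 1‖ / 2 := hfin
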